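/- (Upper bound for majority) There exists a constant C > 0 such that for all integers n ≥ k ≥ 2, the k-composition complexity of the majority function satisfies CC_k(Maj_n) ≤ C · (n/k) · log₂ k. Concretely, one may take m = ⌈n/k⌉ · ⌈log₂(k+1)⌉ inner functions: split the variables into ⌈n/k⌉ groups of at most k variables, let ⌈log₂(k+1)⌉ inner functions output the binary digits of the Hamming weight of each group, and let h reconstruct the total Hamming weight and compare it with n/2. -/
import Mathlib


/-- The Hamming weight of `x ∈ {0,1}^n`: the number of coordinates equal to `1`. -/
def hw (n : ℕ) (x : Fin n → Bool) : ℕ := (Finset.univ.filter (fun i => x i = true)).card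

/-- The majority function `Maj_n`: outputs `1` iff the Hamming weight is at least `n/2`. -/
def maj (n : ℕ) (x : Fin n → Bool) : Bool := decide (n ≤ 2 * hw n x)

/-- `g : {0,1}^n → {0,1}` is `k`-local if it depends on at most `k` coordinates. -/
def IsKLocal {n : ℕ} (k : ℕ) (g : (Fin n → Bool) → Bool) : Prop :=
  ∃ I : Finset (Fin n), I.card ≤ k ∧
    ∀ x y : Fin n → Bool, (∀ i ∈ I, x i = y i) → g x = g y

/-- The `k`-composition complexity of `f : {0,1}^n → D`: the least `m` such that
`f = h(g_1, …, g_m)` with each `g_j` being `k`-local. -/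
noncomputable def CCk {n : ℕ} {D : Type*} (k : ℕ) (f : (Fin n → Bool) → D) : ℕ :=
  sInf {m : ℕ | ∃ (g : Fin m → (Fin n → Bool) → Bool) (h : (Fin m → Bool) → D),
    (∀ j, IsKLocal k (g j)) ∧ ∀ x, f x = h (fun j => g j x)}

/-- A number `w < 2^B` is the sum of its binary digits weighted by powers of two. -/
lemma bits_sum : ∀ (B w : ℕ), w < 2^B →
    ∑ b ∈ Finset.range B, (if Nat.testBit w b then 2^b else 0) = w := by
  intro B
  induction B with
  | zero => intro w hw; interval_cases w; simp
  | succ B ih =>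
    intro w hw
    rw [Finset.sum_range_succ']
    have h2 : w / 2 < 2^B := by
      rw [Nat.div_lt_iff_lt_mul two_pos]; rw [pow_succ] at hw; omega
    have hb : ∀ k, Nat.testBit w (k+1) = Nat.testBit (w/2) k := by
      intro k; rw [Nat.testBit_succ]
    simp only [hb]
    have h3 : (∑ k ∈ Finset.range B, if Nat.testBit (w/2) k then 2^(k+1) else 0)
        = 2 * ∑ k ∈ Finset.range B, if Nat.testBit (w/2) k then 2^k else 0 := by
      rw [Finset.mul_sum]; apply Finset.sum_congr rfl; intro k _; split <;> ring
    rw [h3, ih (w/2) h2, Nat.testBit_zero]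
    rcases Nat.mod_two_eq_zero_or_one w with h | h <;> simp [h] <;> omega

/-- `CCk` upper bound from a decomposition indexed by an arbitrary finite type. -/
lemma CCk_le {n m : ℕ} {D : Type*} {k : ℕ} {f : (Fin n → Bool) → D}
    (ι : Type) [Fintype ι] (hcard : Fintype.card ι = m)
    (g : ι → (Fin n → Bool) → Bool) (h : (ι → Bool) → D)
    (hg : ∀ j, IsKLocal k (g j)) (hf : ∀ x, f x = h fun j => g j x) :
    CCk k f ≤ m := by
  apply Nat.sInf_le
  obtain ⟨e⟩ : Nonempty (Fin m ≃ ι) := ⟨(Fintype.equivFinOfCardEq hcard).symm⟩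
  refine ⟨fun j => g (e j), fun v => h (fun i => v (e.symm i)), fun j => hg (e j), fun x => ?_⟩
  rw [hf x]; congr 1; funext i; simp

/-- The combinatorial core: if the `n` coordinates can be split into `G` groups of
at most `k` coordinates each, and group weights fit in `B` bits, then
`CC_k(Maj_n) ≤ G * B`. -/
lemma maj_nat_bound {n k G B : ℕ} (hk0 : 0 < k) (hnG : n ≤ G * k) (hkB : k < 2^B) :
    CCk k (maj n) ≤ G * B := by
  have hgrp : ∀ i : Fin n, (i : ℕ) / k < G := by
    intro i
    rw [Nat.div_lt_iff_lt_mul hk0]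
    exact lt_of_lt_of_le i.2 hnG
  set grp : Fin n → Fin G := fun i => ⟨(i:ℕ)/k, hgrp i⟩ with hgrpdef
  set w : Fin G → (Fin n → Bool) → ℕ :=
    fun a x => ((Finset.univ.filter fun i => x i = true).filter fun i => grp i = a).card
    with hwdef
  -- group sizes ≤ k
  have hIcard : ∀ a : Fin G, (Finset.univ.filter fun i => grp i = a).card ≤ k := by
    intro a
    have := Finset.card_le_card_of_injOn (fun i => (i : ℕ) % k)
      (s := Finset.univ.filter fun i => grp i = a) (t := Finset.range k)
      (fun i _ => Finset.mem_range.2 (Nat.mod_lt _ hk0)) ?_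
    · simpa using this
    · intro i hi j hj hij
      simp only [Finset.mem_coe, Finset.mem_filter, hgrpdef, Fin.mk.injEq] at hi hj
      have hi2 : (i : ℕ)/k = (a : ℕ) := by
        have := congrArg Fin.val hi.2; simpa using this
      have hj2 : (j : ℕ)/k = (a : ℕ) := by
        have := congrArg Fin.val hj.2; simpa using this
      have d1 := Nat.div_add_mod (i : ℕ) k
      have d2 := Nat.div_add_mod (j : ℕ) k
      have hij' : (i : ℕ) % k = (j : ℕ) % k := by simpa using hij
      refine Fin.ext ?_
      calc (i : ℕ) = k * ((i : ℕ)/k) + (i : ℕ) % k := d1.symm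
        _ = k * ((j : ℕ)/k) + (j : ℕ) % k := by rw [hi2, hj2, hij']
        _ = (j : ℕ) := d2
  have hwle : ∀ a x, w a x ≤ k := by
    intro a x
    refine le_trans (Finset.card_le_card ?_) (hIcard a)
    intro i hi
    simp only [Finset.mem_filter] at hi ⊢
    exact ⟨Finset.mem_univ _, hi.2⟩
  -- total weight
  have hwsum : ∀ x, ∑ a : Fin G, w a x = hw n x := by
    intro x
    rw [hw, Finset.card_eq_sum_card_fiberwise (f := grp) (t := Finset.univ)
      (fun i _ => Finset.mem_univ _)]
  refine CCk_le (Fin G × Fin B) (by simp) (fun p x => Nat.testBit (w p.1 x) p.2)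
    (fun v => decide (n ≤ 2 * ∑ a : Fin G, ∑ b ∈ Finset.range B,
      if h : b < B then (if v (a, ⟨b, h⟩) then 2^b else 0) else 0)) ?_ ?_
  · rintro ⟨a, b⟩
    refine ⟨Finset.univ.filter fun i => grp i = a, hIcard a, fun x y hxy => ?_⟩
    have : w a x = w a y := by
      simp only [hwdef]
      congr 1
      ext i
      simp only [Finset.mem_filter, Finset.mem_univ, true_and]
      constructor
      · rintro ⟨h1, h2⟩
        exact ⟨by rw [← hxy i (by simp [h2])]; exact h1, h2⟩
      · rintro ⟨h1, h2⟩
        exact ⟨by rw [hxy i (by simp [h2])]; exact h1, h2⟩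
    simp [this]
  · intro x
    have hinner : ∀ a : Fin G, (∑ b ∈ Finset.range B,
        if h : b < B then (if Nat.testBit (w a x) b then 2^b else 0) else 0) = w a x := by
      intro a
      have h1 : (∑ b ∈ Finset.range B,
          if h : b < B then (if Nat.testBit (w a x) b then 2^b else 0) else 0)
          = ∑ b ∈ Finset.range B, (if Nat.testBit (w a x) b then 2^b else 0) :=
        Finset.sum_congr rfl (fun b hb => dif_pos (Finset.mem_range.1 hb))
      rw [h1]
      exact bits_sum B _ (lt_of_le_of_lt (hwle a x) hkB)
    simp only [hinner, hwsum, maj]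

/-- The purely analytic estimate `⌈n/k⌉ ⬝ ⌈log₂(k+1)⌉ ≤ 6 ⬝ (n/k) ⬝ log₂ k`. -/
lemma real_bound (n k : ℕ) (hk : 2 ≤ k) (hkn : k ≤ n) :
    ((⌈(n : ℝ) / (k : ℝ)⌉₊ * ⌈Real.logb 2 ((k : ℝ) + 1)⌉₊ : ℕ) : ℝ)
      ≤ 6 * ((n : ℝ) / (k : ℝ)) * Real.logb 2 (k : ℝ) := by
  have hk0 : (0:ℝ) < k := by
    have : 0 < k := by omega
    exact_mod_cast this
  have hk2 : (2:ℝ) ≤ k := by exact_mod_cast hk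
  have hdiv1 : (1:ℝ) ≤ (n:ℝ)/k := (one_le_div hk0).2 (by exact_mod_cast hkn)
  have hG : (⌈(n : ℝ) / (k : ℝ)⌉₊ : ℝ) ≤ 2 * ((n:ℝ)/k) := by
    have h1 := Nat.ceil_lt_add_one (by positivity : (0:ℝ) ≤ (n:ℝ)/k)
    nlinarith
  have hlogk : 1 ≤ Real.logb 2 (k:ℝ) := by
    rw [show (1:ℝ) = Real.logb 2 2 by simp]
    exact Real.logb_le_logb_of_le (by norm_num) (by norm_num) hk2
  have hlog2 : Real.logb 2 ((k:ℝ)+1) ≤ 2 * Real.logb 2 (k:ℝ) := by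
    have h1 : (k:ℝ)+1 ≤ (k:ℝ)*(k:ℝ) := by nlinarith
    calc Real.logb 2 ((k:ℝ)+1) ≤ Real.logb 2 ((k:ℝ)*(k:ℝ)) :=
          Real.logb_le_logb_of_le (by norm_num) (by linarith) h1
      _ = Real.logb 2 (k:ℝ) + Real.logb 2 (k:ℝ) := Real.logb_mul (by linarith) (by linarith)
      _ = 2 * Real.logb 2 (k:ℝ) := by ring
  have hB : (⌈Real.logb 2 ((k : ℝ) + 1)⌉₊ : ℝ) ≤ 3 * Real.logb 2 (k:ℝ) := by
    have h0 : 0 ≤ Real.logb 2 ((k:ℝ)+1) := Real.logb_nonneg (by norm_num) (by linarith)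
    have h1 := Nat.ceil_lt_add_one h0
    linarith
  push_cast
  calc (⌈(n : ℝ) / (k : ℝ)⌉₊ : ℝ) * (⌈Real.logb 2 ((k : ℝ) + 1)⌉₊ : ℝ)
      ≤ (2 * ((n:ℝ)/k)) * (3 * Real.logb 2 (k:ℝ)) := by
        apply mul_le_mul hG hB (by positivity) (by positivity)
    _ = 6 * ((n:ℝ)/k) * Real.logb 2 (k:ℝ) := by ring

/-- Upper bound for majority: `CC_k(Maj_n) ≤ ⌈n/k⌉ ⬝ ⌈log₂(k+1)⌉ ≤ C ⬝ (n/k) ⬝ log₂ k`. -/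
theorem maj_upper_bound :
    ∃ C : ℝ, 0 < C ∧
      ∀ n k : ℕ, 2 ≤ k → k ≤ n →
        CCk k (maj n) ≤ ⌈(n : ℝ) / (k : ℝ)⌉₊ * ⌈Real.logb 2 ((k : ℝ) + 1)⌉₊ ∧
        (CCk k (maj n) : ℝ) ≤ C * ((n : ℝ) / (k : ℝ)) * Real.logb 2 (k : ℝ) := by
  refine ⟨6, by norm_num, fun n k hk hkn => ?_⟩
  have hk0 : (0:ℝ) < k := by
    have : 0 < k := by omega
    exact_mod_cast this
  have hnG : n ≤ ⌈(n : ℝ) / (k : ℝ)⌉₊ * k := by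
    have h1 : (n:ℝ)/k ≤ (⌈(n : ℝ) / (k : ℝ)⌉₊ : ℝ) := Nat.le_ceil _
    have h2 : (n:ℝ) ≤ (⌈(n : ℝ) / (k : ℝ)⌉₊ : ℝ) * k := by
      rw [← div_le_iff₀ hk0]; exact h1
    exact_mod_cast h2
  have hkB : k < 2 ^ ⌈Real.logb 2 ((k : ℝ) + 1)⌉₊ := by
    have h1 : Real.logb 2 ((k:ℝ)+1) ≤ (⌈Real.logb 2 ((k : ℝ) + 1)⌉₊ : ℝ) := Nat.le_ceil _
    have h2 : ((k:ℝ)+1) ≤ 2 ^ (⌈Real.logb 2 ((k : ℝ) + 1)⌉₊ : ℕ) := by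
      have h3 : ((k:ℝ)+1) = 2 ^ Real.logb 2 ((k:ℝ)+1) :=
        (Real.rpow_logb (by norm_num) (by norm_num) (by linarith)).symm
      calc ((k:ℝ)+1) = 2 ^ Real.logb 2 ((k:ℝ)+1) := h3
        _ ≤ (2:ℝ) ^ ((⌈Real.logb 2 ((k : ℝ) + 1)⌉₊ : ℝ)) :=
            Real.rpow_le_rpow_of_exponent_le (by norm_num) h1
        _ = 2 ^ (⌈Real.logb 2 ((k : ℝ) + 1)⌉₊ : ℕ) := by
            rw [Real.rpow_natCast]
    have : (k:ℕ)+1 ≤ 2 ^ ⌈Real.logb 2 ((k : ℝ) + 1)⌉₊ := by exact_mod_cast h2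
    omega
  have hnat : CCk k (maj n) ≤ ⌈(n : ℝ) / (k : ℝ)⌉₊ * ⌈Real.logb 2 ((k : ℝ) + 1)⌉₊ :=
    maj_nat_bound (by omega) hnG hkB
  refine ⟨hnat, ?_⟩
  calc (CCk k (maj n) : ℝ)
      ≤ ((⌈(n : ℝ) / (k : ℝ)⌉₊ * ⌈Real.logb 2 ((k : ℝ) + 1)⌉₊ : ℕ) : ℝ) := by
        exact_mod_cast hnat
    _ ≤ 6 * ((n : ℝ) / (k : ℝ)) * Real.logb 2 (k : ℝ) := real_bound n k hk hkn
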